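/- Let $B$ be a local ring with maximal ideal $\overline{\mathfrak{m}}$, and let $b \in B$ with $b \neq 0$, $b^2 = 0$, and $\overline{\mathfrak{m}}b = 0$. Let $\alpha : B^m \to B^n$ be a $B$-linear map whose matrix has all entries in the ideal $(b)$. Then the cokernel of $\alpha$ is isomorphic as a $B$-module to $B^{n-r} \oplus (B/(b))^{r}$ for some $0 \leq r \leq \min(m,n)$. -/

import Mathlib

open Submodule


section aux
variable {B : Type} [CommRing B]

/-- Linear version of `Equiv.sumPiEquivProdPi`. -/
def sumPiLinearEquiv {ι ι' : Type*} (φ : ι ⊕ ι' → Type*) [∀ s, AddCommGroup (φ s)]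
    [∀ s, Module B (φ s)] :
    ((s : ι ⊕ ι') → φ s) ≃ₗ[B] ((i : ι) → φ (.inl i)) × ((j : ι') → φ (.inr j)) :=
  { Equiv.sumPiEquivProdPi φ with map_add' := fun _ _ => rfl, map_smul' := fun _ _ => rfl }

/-- Linear version of `Fin.consEquiv`. -/
def consLinEquiv (n : ℕ) : (Fin (n + 1) → B) ≃ₗ[B] B × (Fin n → B) where
  toFun f := (f 0, fun i => f i.succ)
  invFun p := Fin.cons p.1 p.2
  map_add' _ _ := rfl
  map_smul' _ _ := rfl
  left_inv f := funext fun i => Fin.cases rfl (fun j => rfl) i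
  right_inv p := by ext <;> simp

/-- The model submodule: first `r` coordinates in `(b)`, the rest zero. -/
def patt (b : B) (n r : ℕ) : Submodule B (Fin n → B) :=
  Submodule.pi Set.univ
    (fun i : Fin n => if (i : ℕ) < r then (Ideal.span {b} : Submodule B B) else ⊥)

lemma mem_patt {b : B} {n r : ℕ} {x : Fin n → B} :
    x ∈ patt b n r ↔
      ∀ i : Fin n, x i ∈ (if (i : ℕ) < r then (Ideal.span {b} : Submodule B B) else ⊥) := by
  simp [patt, Submodule.mem_pi]

lemma patt_zero (b : B) (n : ℕ) : patt b n 0 = ⊥ := by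
  ext x
  simp only [mem_patt, Nat.not_lt_zero, if_false, mem_bot]
  constructor
  · intro h; funext i; exact h i
  · intro h i; rw [h]; rfl

lemma map_trans {M N P : Type} [AddCommGroup M] [AddCommGroup N] [AddCommGroup P]
    [Module B M] [Module B N] [Module B P] (e : M ≃ₗ[B] N) (f : N ≃ₗ[B] P)
    (S : Submodule B M) :
    Submodule.map (e ≪≫ₗ f).toLinearMap S
      = Submodule.map f.toLinearMap (Submodule.map e.toLinearMap S) := by
  rw [← Submodule.map_comp]; rfl

lemma map_prod_equiv {M N M' N' : Type} [AddCommGroup M] [AddCommGroup N] [AddCommGroup M']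
    [AddCommGroup N'] [Module B M] [Module B N] [Module B M'] [Module B N']
    (e₁ : M ≃ₗ[B] M') (e₂ : N ≃ₗ[B] N') (p : Submodule B M) (q : Submodule B N) :
    Submodule.map (e₁.prodCongr e₂).toLinearMap (p.prod q)
      = (Submodule.map e₁.toLinearMap p).prod (Submodule.map e₂.toLinearMap q) := by
  rw [Submodule.map_equiv_eq_comap_symm, LinearEquiv.prodCongr_symm, LinearEquiv.coe_prodCongr,
    LinearMap.prodMap_comap_prod, Submodule.comap_equiv_eq_map_symm,
    Submodule.comap_equiv_eq_map_symm, e₁.symm_symm, e₂.symm_symm]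

lemma map_consLinEquiv_symm_prod (b : B) (n r : ℕ) :
    Submodule.map (consLinEquiv n).symm.toLinearMap
        (Submodule.prod (Ideal.span {b} : Submodule B B) (patt b n r)) = patt b (n + 1) (r + 1) := by
  ext x
  rw [Submodule.map_equiv_eq_comap_symm, LinearEquiv.symm_symm, Submodule.mem_comap,
    Submodule.mem_prod]
  constructor
  · rintro ⟨h1, h2⟩
    rw [mem_patt]
    intro i
    refine Fin.cases ?_ (fun j => ?_) i
    · simpa [consLinEquiv] using h1
    · have := h2 j
      simpa [consLinEquiv] using this
  · intro hx
    rw [mem_patt] at hx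
    constructor
    · simpa [consLinEquiv] using hx 0
    · intro j _
      have := hx j.succ
      simpa [consLinEquiv] using this

end aux

section key
variable {B : Type} [CommRing B] [IsLocalRing B]

lemma key (b : B) (hb2 : b ^ 2 = 0)
    (hmb : ∀ x ∈ IsLocalRing.maximalIdeal B, x * b = 0) :
    ∀ (n m : ℕ) (v : Fin m → Fin n → B), (∀ j i, v j i ∈ Ideal.span {b}) →
      ∃ r : ℕ, r ≤ min m n ∧ ∃ e : (Fin n → B) ≃ₗ[B] (Fin n → B),
        Submodule.map e.toLinearMap (Submodule.span B (Set.range v)) = patt b n r := by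
  intro n
  induction n with
  | zero =>
    intro m v hv
    exact ⟨0, by omega, LinearEquiv.refl B _, Subsingleton.elim _ _⟩
  | succ n ih =>
    intro m v hv
    by_cases hz : ∀ j i, v j i = 0
    · refine ⟨0, by omega, LinearEquiv.refl B _, ?_⟩
      have hs : Submodule.span B (Set.range v) = ⊥ := by
        rw [Submodule.span_eq_bot]
        rintro _ ⟨j, rfl⟩
        funext i; exact hz j i
      rw [hs, Submodule.map_bot, patt_zero]
    push_neg at hz
    obtain ⟨j₀, i₀, h00⟩ := hz
    rcases m with _ | m'
    · exact j₀.elim0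
    -- move the nonzero entry to position (0,0)
    set σ : Fin (n + 1) ≃ Fin (n + 1) := Equiv.swap 0 i₀ with hσ
    set τ : Fin (m' + 1) ≃ Fin (m' + 1) := Equiv.swap 0 j₀ with hτ
    set v' : Fin (m' + 1) → Fin (n + 1) → B := fun j i => v (τ j) (σ i) with hv'def
    have hv' : ∀ j i, v' j i ∈ Ideal.span {b} := fun j i => hv _ _
    have h00' : v' 0 0 ≠ 0 := by
      simpa [hv'def, hσ, hτ, Equiv.swap_apply_left] using h00
    set F : (Fin (n + 1) → B) ≃ₗ[B] (Fin (n + 1) → B) := LinearEquiv.funCongrLeft B B σ with hF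
    have hFmap : Submodule.map F.toLinearMap (Submodule.span B (Set.range v))
        = Submodule.span B (Set.range v') := by
      rw [Submodule.map_span]
      congr 1
      have h1 : Set.range v' = (fun f => f ∘ ⇑σ) '' Set.range v := by
        rw [show v' = (fun f => f ∘ ⇑σ) ∘ (v ∘ ⇑τ) from rfl, Set.range_comp,
          Set.range_comp v ⇑τ, τ.range_eq_univ, Set.image_univ]
      rw [h1]; rfl
    -- factor out b
    choose c hc using fun j i => Ideal.mem_span_singleton.mp (hv' j i)
    have hu : IsUnit (c 0 0) := by
      by_contra hcu
      exact h00' (by rw [hc 0 0, mul_comm]; exact hmb _ hcu)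
    obtain ⟨u, huc⟩ := hu
    -- clear the first coordinate of all other generators
    set g : Fin (m' + 1) → Fin (n + 1) → B :=
      fun j => if j = 0 then v' 0 else v' j - (c j 0 * ↑u⁻¹) • v' 0 with hg
    have hspan_g : Submodule.span B (Set.range g) = Submodule.span B (Set.range v') := by
      apply le_antisymm <;> rw [Submodule.span_le] <;> rintro _ ⟨j, rfl⟩
      · by_cases hj : j = 0
        · subst hj; simp only [hg, if_pos rfl]; exact Submodule.subset_span ⟨0, rfl⟩
        · simp only [hg, if_neg hj]
          exact sub_mem (Submodule.subset_span ⟨j, rfl⟩)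
            (Submodule.smul_mem _ _ (Submodule.subset_span ⟨0, rfl⟩))
      · by_cases hj : j = 0
        · subst hj
          have : v' 0 = g 0 := by simp [hg]
          rw [this]; exact Submodule.subset_span ⟨0, rfl⟩
        · have : v' j = g j + (c j 0 * ↑u⁻¹) • g 0 := by simp [hg, hj]
          rw [this]
          exact add_mem (Submodule.subset_span ⟨j, rfl⟩)
            (Submodule.smul_mem _ _ (Submodule.subset_span ⟨0, rfl⟩))
    have hg0 : ∀ j, j ≠ 0 → g j 0 = 0 := by
      intro j hj
      simp only [hg, if_neg hj, Pi.sub_apply, Pi.smul_apply, smul_eq_mul]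
      rw [hc j 0, hc 0 0, ← huc,
        show c j 0 * ↑u⁻¹ * (b * ↑u) = b * c j 0 * (↑u⁻¹ * ↑u) by ring, u.inv_mul, mul_one,
        sub_self]
    have hgmem : ∀ j i, g j i ∈ Ideal.span {b} := by
      intro j i
      by_cases hj : j = 0
      · subst hj; simp only [hg, if_pos rfl]; exact hv' 0 i
      · simp only [hg, if_neg hj, Pi.sub_apply, Pi.smul_apply, smul_eq_mul]
        exact sub_mem (hv' j i) (Ideal.mul_mem_left _ _ (hv' 0 i))
    -- the automorphism clearing the tail of g 0
    set w : Fin (n + 1) → B := fun i => if i = 0 then 0 else ↑u⁻¹ * c 0 i with hw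
    have hw0 : w 0 = 0 := by simp [hw]
    set S : (Fin (n + 1) → B) →ₗ[B] (Fin (n + 1) → B) :=
      (LinearMap.proj 0).smulRight w with hS
    have hScomp : ∀ (x : Fin (n + 1) → B) (a : B), True := fun _ _ => trivial
    set e₁ : (Fin (n + 1) → B) ≃ₗ[B] (Fin (n + 1) → B) :=
      LinearEquiv.ofLinear (LinearMap.id - S) (LinearMap.id + S)
        (by
          apply LinearMap.ext; intro x
          show (x + x 0 • w) - ((x + x 0 • w) 0) • w = x
          rw [show (x + x 0 • w) 0 = x 0 from by simp [hw0]]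
          exact add_sub_cancel_right x _)
        (by
          apply LinearMap.ext; intro x
          show (x - x 0 • w) + ((x - x 0 • w) 0) • w = x
          rw [show (x - x 0 • w) 0 = x 0 from by simp [hw0]]
          exact sub_add_cancel x _) with he₁
    have he₁apply : ∀ x : Fin (n + 1) → B, e₁ x = x - x 0 • w := fun x => rfl
    set h : Fin (m' + 1) → Fin (n + 1) → B := fun j => e₁ (g j) with hh
    have hmap₁ : Submodule.map e₁.toLinearMap (Submodule.span B (Set.range g))
        = Submodule.span B (Set.range h) := by
      rw [Submodule.map_span, ← Set.range_comp]; rfl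
    have hg00 : g 0 0 = b * ↑u := by simp only [hg, if_pos rfl]; rw [hc 0 0, huc]
    have hh0 : h 0 = Pi.single 0 (b * ↑u) := by
      funext i
      show e₁ (g 0) i = _
      rcases eq_or_ne i 0 with hi | hi
      · subst hi
        rw [he₁apply]
        simp [hw0, hg00]
      · rw [he₁apply]
        simp only [Pi.sub_apply, Pi.smul_apply, smul_eq_mul, Pi.single_eq_of_ne hi]
        rw [hg00]
        show g 0 i - b * ↑u * (if i = 0 then 0 else ↑u⁻¹ * c 0 i) = 0
        rw [if_neg hi,
          show b * ↑u * (↑u⁻¹ * c 0 i) = b * c 0 i * (↑u * ↑u⁻¹) by ring, u.mul_inv, mul_one]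
        have : g 0 i = b * c 0 i := by simp only [hg, if_pos rfl]; exact hc 0 i
        rw [this, sub_self]
    have hhj : ∀ j : Fin m', h j.succ = g j.succ := by
      intro j
      show e₁ (g j.succ) = g j.succ
      rw [he₁apply, hg0 j.succ (Fin.succ_ne_zero j), zero_smul, sub_zero]
    -- split off the first coordinate
    set P : (Fin (n + 1) → B) ≃ₗ[B] B × (Fin n → B) := consLinEquiv n with hP
    set t : Fin m' → Fin n → B := fun j i => h j.succ i.succ with ht
    have hmapP : Submodule.map P.toLinearMap (Submodule.span B (Set.range h))
        = Submodule.prod (Ideal.span {b} : Submodule B B) (Submodule.span B (Set.range t)) := by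
      rw [Submodule.map_span, Fin.range_fin_succ, Set.image_insert_eq, Submodule.span_insert]
      have h1 : P (h 0) = ((b * ↑u : B), (0 : Fin n → B)) := by
        rw [hh0]
        refine Prod.ext ?_ ?_
        · simp [hP, consLinEquiv]
        · funext i
          simp [hP, consLinEquiv, Pi.single_eq_of_ne (Fin.succ_ne_zero i)]
      have h2 : ⇑P ∘ Fin.tail h = (LinearMap.inr B B (Fin n → B)) ∘ t := by
        funext j
        refine Prod.ext ?_ rfl
        simp only [Function.comp_apply, Fin.tail]
        show h j.succ 0 = 0
        rw [hhj j, hg0 _ (Fin.succ_ne_zero j)]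
      simp only [LinearEquiv.coe_coe]
      rw [← Set.range_comp, h1, h2, Set.range_comp, ← Submodule.map_span, Submodule.map_inr,
        show ({((b * ↑u : B), (0 : Fin n → B))} : Set (B × (Fin n → B)))
            = (LinearMap.inl B B (Fin n → B)) '' {b * ↑u} by
          rw [Set.image_singleton]; rfl,
        ← Submodule.map_span, Submodule.map_inl,
        show (Submodule.span B {(b * ↑u : B)} : Submodule B B) = Ideal.span {b} from
          Ideal.span_singleton_mul_right_unit u.isUnit b,
        Submodule.prod_sup_prod, sup_bot_eq, bot_sup_eq]
    have htmem : ∀ j i, t j i ∈ Ideal.span {b} := by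
      intro j i
      rw [ht]
      show h j.succ i.succ ∈ _
      rw [hhj j]
      exact hgmem _ _
    obtain ⟨r₁, hr₁, e₂, he₂⟩ := ih m' t htmem
    refine ⟨r₁ + 1, by omega, F ≪≫ₗ e₁ ≪≫ₗ P ≪≫ₗ (LinearEquiv.refl B B).prodCongr e₂ ≪≫ₗ P.symm, ?_⟩
    rw [map_trans, map_trans, map_trans, map_trans, hFmap, ← hspan_g, hmap₁, hmapP,
      map_prod_equiv, he₂, show (LinearEquiv.refl B B).toLinearMap = LinearMap.id from rfl,
      Submodule.map_id, map_consLinEquiv_symm_prod]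
end key


theorem stmt11 (B : Type) [CommRing B] [IsLocalRing B] (b : B) (hb : b ≠ 0)
    (hb2 : b ^ 2 = 0) (hmb : ∀ x ∈ IsLocalRing.maximalIdeal B, x * b = 0)
    (m n : ℕ) (α : (Fin m → B) →ₗ[B] (Fin n → B))
    (hmat : ∀ (i : Fin n) (j : Fin m),
      LinearMap.toMatrix (Pi.basisFun B (Fin m)) (Pi.basisFun B (Fin n)) α i j ∈
        Ideal.span {b}) :
    ∃ r : ℕ, r ≤ min m n ∧
      Nonempty (((Fin n → B) ⧸ LinearMap.range α) ≃ₗ[B]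
        ((Fin (n - r) → B) × (Fin r → B ⧸ Ideal.span {b}))) := by
  classical
  set M := LinearMap.toMatrix (Pi.basisFun B (Fin m)) (Pi.basisFun B (Fin n)) α with hM
  have hα : LinearMap.range α = Submodule.span B (Set.range M.transpose) := by
    have h1 : α = Matrix.toLin' M := by
      rw [← Matrix.toLin_eq_toLin', hM, Matrix.toLin_toMatrix]
    rw [h1, Matrix.range_toLin']; rfl
  obtain ⟨r, hr, e, he⟩ := key b hb2 hmb n m M.transpose (fun j i => hmat i j)
  have hrn : r ≤ n := le_trans hr (min_le_right _ _)
  refine ⟨r, hr, ?_⟩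
  set p : Fin n → Submodule B B :=
    fun i => if (i : ℕ) < r then (Ideal.span {b} : Submodule B B) else ⊥ with hp
  set eIdx : Fin r ⊕ Fin (n - r) ≃ Fin n :=
    finSumFinEquiv.trans (finCongr (by omega)) with heIdx
  have hinl : ∀ j : Fin r, ((eIdx (Sum.inl j) : Fin n) : ℕ) = (j : ℕ) := by
    intro j; simp [heIdx]
  have hinr : ∀ j : Fin (n - r), ((eIdx (Sum.inr j) : Fin n) : ℕ) = r + (j : ℕ) := by
    intro j; simp [heIdx]
  have q1 : ((Fin n → B) ⧸ LinearMap.range α) ≃ₗ[B] ((Fin n → B) ⧸ patt b n r) :=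
    Submodule.Quotient.equiv _ _ e (by rw [hα]; exact he)
  have q2 : ((Fin n → B) ⧸ patt b n r) ≃ₗ[B] ((i : Fin n) → B ⧸ p i) :=
    (Submodule.quotEquivOfEq _ _ (rfl : patt b n r = Submodule.pi Set.univ p)) ≪≫ₗ
      Submodule.quotientPi p
  have q3 : ((i : Fin n) → B ⧸ p i) ≃ₗ[B] ((s : Fin r ⊕ Fin (n - r)) → B ⧸ p (eIdx s)) :=
    (LinearEquiv.piCongrLeft B (fun i => B ⧸ p i) eIdx).symm
  have q4 : ((s : Fin r ⊕ Fin (n - r)) → B ⧸ p (eIdx s)) ≃ₗ[B]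
      (((j : Fin r) → B ⧸ p (eIdx (Sum.inl j))) × ((j : Fin (n - r)) → B ⧸ p (eIdx (Sum.inr j)))) :=
    sumPiLinearEquiv (fun s => B ⧸ p (eIdx s))
  have hl : ∀ j : Fin r, p (eIdx (Sum.inl j)) = Ideal.span {b} := by
    intro j; rw [hp]; dsimp only; rw [hinl j, if_pos j.2]
  have hr' : ∀ j : Fin (n - r), p (eIdx (Sum.inr j)) = ⊥ := by
    intro j; rw [hp]; dsimp only; rw [hinr j, if_neg (by omega)]
  have q5 : (((j : Fin r) → B ⧸ p (eIdx (Sum.inl j))) ×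
        ((j : Fin (n - r)) → B ⧸ p (eIdx (Sum.inr j)))) ≃ₗ[B]
      ((Fin r → B ⧸ Ideal.span {b}) × (Fin (n - r) → B)) :=
    (LinearEquiv.piCongrRight fun j : Fin r =>
        Submodule.quotEquivOfEq _ _ (hl j)).prodCongr
      (LinearEquiv.piCongrRight fun j : Fin (n - r) =>
        Submodule.quotEquivOfEqBot _ (hr' j))
  exact ⟨q1 ≪≫ₗ q2 ≪≫ₗ q3 ≪≫ₗ q4 ≪≫ₗ q5 ≪≫ₗ LinearEquiv.prodComm B _ _⟩
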